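/- Let T be a string with suffix array SA, let A be a string, and let [ℓ, r) be the suffix range of A in T. For each i in [ℓ, r) with SA[i] + |A| < |T|, let f(i) be the suffix-array position of the suffix T_{SA[i]+|A|}. Then f is strictly increasing on the set of such i, i.e., for ℓ ≤ i < j < r with both defined, f(i) < f(j). -/

import Mathlib

lemma lex_append_left_iff' {α : Type*} [LinearOrder α] (c x y : List α) :
    List.Lex (· < ·) (c ++ x) (c ++ y) ↔ List.Lex (· < ·) x y := by
  induction c with
  | nil => rfl
  | cons a c ih => simpa [List.lex_cons_iff] using ih

theorem stmt5 {α : Type*} [LinearOrder α] (T A : List α)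
    (SA : Equiv.Perm (Fin T.length))
    (hsorted : ∀ i j : Fin T.length, i < j →
      List.Lex (· < ·) (T.drop (SA i).val) (T.drop (SA j).val))
    (ℓ r : ℕ)
    (hrange : ∀ i : Fin T.length, (A <+: T.drop (SA i).val) ↔ (ℓ ≤ i.val ∧ i.val < r))
    (i j : Fin T.length) (hi : ℓ ≤ i.val) (hij : i < j) (hj : j.val < r)
    (hi' : (SA i).val + A.length < T.length) (hj' : (SA j).val + A.length < T.length) :
    SA.symm ⟨(SA i).val + A.length, hi'⟩ < SA.symm ⟨(SA j).val + A.length, hj'⟩ := by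
  have hAi : A <+: T.drop (SA i).val := (hrange i).2 ⟨hi, by have := Fin.lt_def.mp hij; omega⟩
  have hAj : A <+: T.drop (SA j).val := (hrange j).2 ⟨le_trans hi (le_of_lt hij), hj⟩
  obtain ⟨x, hx⟩ := hAi
  obtain ⟨y, hy⟩ := hAj
  have hxd : T.drop ((SA i).val + A.length) = x := by
    rw [← List.drop_drop, ← hx, List.drop_left]
  have hyd : T.drop ((SA j).val + A.length) = y := by
    rw [← List.drop_drop, ← hy, List.drop_left]
  have hxy : List.Lex (· < ·) x y := by
    have := hsorted i j hij
    rw [← hx, ← hy, lex_append_left_iff'] at this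
    exact this
  set u := SA.symm ⟨(SA i).val + A.length, hi'⟩ with hu
  set v := SA.symm ⟨(SA j).val + A.length, hj'⟩ with hv
  rcases lt_trichotomy u v with h | h | h
  · exact h
  · exfalso
    have h3 := congrArg SA h
    rw [hu, hv, Equiv.apply_symm_apply, Equiv.apply_symm_apply] at h3
    have h4 : (SA i).val + A.length = (SA j).val + A.length := congrArg Fin.val h3
    have : SA i = SA j := by
      apply Fin.ext; omega
    exact absurd (SA.injective this) hij.ne
  · exfalso
    have h2 := hsorted v u h
    have hsu : SA u = ⟨(SA i).val + A.length, hi'⟩ := by rw [hu, Equiv.apply_symm_apply]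
    have hsv : SA v = ⟨(SA j).val + A.length, hj'⟩ := by rw [hv, Equiv.apply_symm_apply]
    rw [hsu, hsv] at h2
    simp only [hxd, hyd] at h2
    exact asymm hxy h2
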